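/- For ν > 0 and ħ > 0, the Laplace integral of the Borel transform BW(ζ) = (1/(2ζ))(1/(e^{ζ/(2ν)}-1) + 1/(e^{ζ/(2ν)}+1) - 2ν/ζ) along the positive real axis converges, and the Borel sum of e^{W(ħ)} equals e^{ν/ħ} Γ(ν/ħ + 1/2) / (√(2π) (ν/ħ)^{ν/ħ}) (Binet's formula). -/

import Mathlib

open MeasureTheory

/-- BW(ζ) = (1/(2ζ))(1/(e^{ζ/(2ν)}-1) + 1/(e^{ζ/(2ν)}+1) - 2ν/ζ) on the real line. -/
noncomputable def weberBorelTransformReal (ν ζ : ℝ) : ℝ :=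
  (1 / (2 * ζ)) *
    (1 / (Real.exp (ζ / (2 * ν)) - 1) + 1 / (Real.exp (ζ / (2 * ν)) + 1) - 2 * ν / ζ)

namespace WeberBinet

open Real Filter Set

/-- The Borel transform in the normalized variable. -/
noncomputable def g (t : ℝ) : ℝ := (1 / (2 * t)) * (1 / Real.sinh t - 1 / t)

lemma mono_aux {f f' : ℝ → ℝ} (hd : ∀ y, HasDerivAt f (f' y) y)
    (h' : ∀ y ∈ Set.Ioi (0:ℝ), 0 ≤ f' y) {t : ℝ} (ht : 0 ≤ t) : f 0 ≤ f t := by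
  have hm : MonotoneOn f (Set.Ici 0) := by
    apply monotoneOn_of_deriv_nonneg (convex_Ici 0)
    · exact fun y _ => (hd y).continuousAt.continuousWithinAt
    · intro y hy
      exact (hd y).differentiableAt.differentiableWithinAt
    · intro y hy
      rw [(hd y).deriv]
      exact h' y (by simpa [interior_Ici] using hy)
  exact hm self_mem_Ici (mem_Ici.mpr ht) ht

lemma cosh_sub_one_le {t : ℝ} (ht : 0 ≤ t) : Real.cosh t - 1 ≤ t * Real.sinh t := by
  have hd : ∀ y : ℝ, HasDerivAt (fun y => y * Real.sinh y - Real.cosh y + 1)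
      (y * Real.cosh y) y := by
    intro y
    have h1 : HasDerivAt (fun y : ℝ => y * Real.sinh y - Real.cosh y + 1)
        (1 * Real.sinh y + y * Real.cosh y - Real.sinh y) y :=
      (((hasDerivAt_id y).mul (Real.hasDerivAt_sinh y)).sub (Real.hasDerivAt_cosh y)).add_const 1
    convert h1 using 1; ring
  have := mono_aux hd (fun y hy => by
    have hy' : (0:ℝ) < y := hy
    positivity) ht
  simp at this
  linarith

lemma sinh_sub_le {t : ℝ} (ht : 0 ≤ t) : Real.sinh t - t ≤ t * (Real.cosh t - 1) := by
  have hd : ∀ y : ℝ, HasDerivAt (fun y => y * Real.cosh y - Real.sinh y)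
      (y * Real.sinh y) y := by
    intro y
    have h1 : HasDerivAt (fun y : ℝ => y * Real.cosh y - Real.sinh y)
        (1 * Real.cosh y + y * Real.sinh y - Real.cosh y) y :=
      ((hasDerivAt_id y).mul (Real.hasDerivAt_cosh y)).sub (Real.hasDerivAt_sinh y)
    convert h1 using 1; ring
  have := mono_aux hd (fun y hy => by
    have : (0:ℝ) < y := hy
    have := Real.sinh_pos_iff.mpr this
    positivity) ht
  simp at this
  nlinarith

lemma g_eq {t : ℝ} (ht : 0 < t) :
    g t = (t - Real.sinh t) / (2 * t ^ 2 * Real.sinh t) := by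
  have hs : Real.sinh t ≠ 0 := Real.sinh_ne_zero.mpr ht.ne'
  have ht' : t ≠ 0 := ht.ne'
  rw [g]
  field_simp

lemma g_abs {t : ℝ} (ht : 0 < t) : |g t| ≤ 1 / 2 := by
  have hs : 0 < Real.sinh t := Real.sinh_pos_iff.mpr ht
  have h1 : t ≤ Real.sinh t := Real.self_le_sinh_iff.mpr ht.le
  have h2 : Real.sinh t - t ≤ t ^ 2 * Real.sinh t := by
    have := sinh_sub_le ht.le
    have := cosh_sub_one_le ht.le
    nlinarith
  rw [g_eq ht, abs_le]
  constructor
  · rw [neg_le, ← neg_div, neg_sub]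
    rw [div_le_iff₀ (by positivity)]
    nlinarith
  · apply le_trans _ (by norm_num : (0:ℝ) ≤ 1/2)
    apply div_nonpos_of_nonpos_of_nonneg
    · linarith
    · positivity

lemma g_contOn : ContinuousOn g (Set.Ioi (0:ℝ)) := by
  intro t ht
  have ht0 : t ≠ 0 := (mem_Ioi.mp ht).ne'
  have hs : Real.sinh t ≠ 0 := Real.sinh_ne_zero.mpr ht0
  apply ContinuousAt.continuousWithinAt
  apply ContinuousAt.mul
  · exact continuousAt_const.div (by fun_prop) (by simpa using ht0)
  · exact (continuousAt_const.div Real.continuous_sinh.continuousAt hs).sub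
      (continuousAt_const.div continuousAt_id ht0)

lemma integrable_exp_mul_g {c : ℝ} (hc : 0 < c) :
    IntegrableOn (fun t => Real.exp (-c * t) * g t) (Set.Ioi (0:ℝ)) := by
  have hmeas : AEStronglyMeasurable (fun t => Real.exp (-c * t) * g t)
      (volume.restrict (Set.Ioi (0:ℝ))) :=
    (((Real.continuous_exp.comp (by fun_prop)).continuousOn).mul g_contOn).aestronglyMeasurable
      measurableSet_Ioi
  apply Integrable.mono' ((exp_neg_integrableOn_Ioi 0 hc).mul_const (1/2)) hmeas
  filter_upwards [ae_restrict_mem measurableSet_Ioi] with t ht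
  rw [norm_mul, Real.norm_eq_abs, Real.abs_exp, Real.norm_eq_abs]
  exact mul_le_mul_of_nonneg_left (g_abs ht) (Real.exp_pos _).le

lemma integral_exp_neg_mul {b : ℝ} (hb : 0 < b) :
    ∫ t in Set.Ioi (0:ℝ), Real.exp (-b * t) = 1 / b := by
  have : ∀ t : ℝ, Real.exp (-b * t) = (fun u => Real.exp (-u)) (b * t) := by
    intro t; simp [neg_mul]
  simp_rw [this]
  rw [integral_comp_mul_left_Ioi (fun u => Real.exp (-u)) 0 hb, mul_zero,
    integral_exp_neg_Ioi_zero, smul_eq_mul, mul_one, one_div]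

lemma J_abs {x : ℝ} (hx : 0 < x) :
    |∫ t in Set.Ioi (0:ℝ), Real.exp (-(2*x) * t) * g t| ≤ 1 / (4 * x) := by
  have h2x : 0 < 2 * x := by linarith
  have hint := integrable_exp_mul_g h2x
  rw [← Real.norm_eq_abs]
  calc ‖∫ t in Set.Ioi (0:ℝ), Real.exp (-(2*x) * t) * g t‖
      ≤ ∫ t in Set.Ioi (0:ℝ), ‖Real.exp (-(2*x) * t) * g t‖ := norm_integral_le_integral_norm _
    _ ≤ ∫ t in Set.Ioi (0:ℝ), Real.exp (-(2*x) * t) * (1/2) := by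
        apply setIntegral_mono_on hint.norm
          ((exp_neg_integrableOn_Ioi 0 h2x).mul_const _) measurableSet_Ioi
        intro t ht
        rw [norm_mul, Real.norm_eq_abs, Real.abs_exp, Real.norm_eq_abs]
        exact mul_le_mul_of_nonneg_left (g_abs ht) (Real.exp_pos _).le
    _ = 1 / (4 * x) := by
        rw [integral_mul_const, integral_exp_neg_mul h2x]
        field_simp
        ring

lemma frullani {α β : ℝ} (hα : 0 < α) (hβ : α < β) :
    IntegrableOn (fun t => (Real.exp (-α*t) - Real.exp (-β*t))/t) (Set.Ioi (0:ℝ)) ∧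
    ∫ t in Set.Ioi (0:ℝ), (Real.exp (-α*t) - Real.exp (-β*t))/t = Real.log (β/α) := by
  have hβ0 : 0 < β := hα.trans hβ
  set μ := volume.restrict (Set.Ioi (0:ℝ)) with hμ
  set ν := volume.restrict (Set.Ioc α β) with hν
  set f : ℝ → ℝ → ℝ := fun t u => Real.exp (-(u * t)) with hf
  have hFc : Continuous (Function.uncurry f) := by
    apply Real.continuous_exp.comp; fun_prop
  have hnorm : ∀ t u : ℝ, ‖f t u‖ = Real.exp (-(u * t)) := fun t u => by
    simp [hf, Real.abs_exp]
  -- integrability on the product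
  have hInt : Integrable (Function.uncurry f) (μ.prod ν) := by
    rw [integrable_prod_iff' hFc.aestronglyMeasurable]
    constructor
    · filter_upwards [ae_restrict_mem measurableSet_Ioc] with u hu
      have hu0 : 0 < u := hα.trans_le hu.1.le
      have : (fun t => Function.uncurry f (t, u)) = fun t => Real.exp (-u * t) := by
        funext t; simp [hf, Function.uncurry, neg_mul]
      rw [this]
      exact exp_neg_integrableOn_Ioi 0 hu0
    · have h1u : Integrable (fun u : ℝ => 1/u) ν := by
        have hco : ContinuousOn (fun u : ℝ => 1 / u) (Set.Icc α β) := by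
          apply ContinuousOn.div continuousOn_const continuousOn_id
          intro u hu; exact (hα.trans_le hu.1).ne'
        exact (hco.integrableOn_Icc).mono_set Set.Ioc_subset_Icc_self
      apply h1u.congr
      filter_upwards [ae_restrict_mem measurableSet_Ioc] with u hu
      have hu0 : 0 < u := hα.trans_le hu.1.le
      have : (fun t => ‖Function.uncurry f (t, u)‖) = fun t => Real.exp (-u * t) := by
        funext t; rw [Function.uncurry]; rw [hnorm t u]; ring_nf
      rw [hμ, this, integral_exp_neg_mul hu0]
  -- swap
  have hswap := integral_integral_swap hInt
  -- inner integral over u, for t > 0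
  have hinner : ∀ t : ℝ, t ∈ Set.Ioi (0:ℝ) →
      ∫ u, f t u ∂ν = (Real.exp (-α*t) - Real.exp (-β*t))/t := by
    intro t ht
    have ht0 : (0:ℝ) < t := ht
    rw [hν, ← intervalIntegral.integral_of_le hβ.le]
    have : ∀ u : ℝ, f t u = Real.exp (-t * u) := fun u => by rw [hf]; ring_nf
    simp_rw [this]
    rw [intervalIntegral.integral_comp_mul_left (fun z => Real.exp z) (neg_ne_zero.mpr ht0.ne')]
    rw [integral_exp, smul_eq_mul]
    field_simp
    ring
  -- inner integral over t, for u in Ioc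
  have hinner2 : ∀ u : ℝ, u ∈ Set.Ioc α β → ∫ t, f t u ∂μ = 1/u := by
    intro u hu
    have hu0 : 0 < u := hα.trans_le hu.1.le
    have : (fun t => f t u) = fun t => Real.exp (-u * t) := by
      funext t; rw [hf]; ring_nf
    rw [hμ, this, integral_exp_neg_mul hu0]
  constructor
  · have := hInt.integral_prod_left
    apply this.congr
    filter_upwards [ae_restrict_mem measurableSet_Ioi] with t ht
    exact hinner t ht
  · calc ∫ t in Set.Ioi (0:ℝ), (Real.exp (-α*t) - Real.exp (-β*t))/t
        = ∫ t, (∫ u, f t u ∂ν) ∂μ := by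
          rw [hμ]
          exact (setIntegral_congr_fun measurableSet_Ioi (fun t ht => (hinner t ht).symm))
      _ = ∫ u, (∫ t, f t u ∂μ) ∂ν := hswap
      _ = ∫ u in Set.Ioc α β, 1/u := by
          rw [hν]
          exact setIntegral_congr_fun measurableSet_Ioc hinner2
      _ = Real.log (β/α) := by
          rw [← intervalIntegral.integral_of_le hβ.le]
          apply integral_one_div
          intro h
          rw [Set.uIcc_of_le hβ.le] at h
          exact absurd h.1 (not_le.mpr hα)


/-- Auxiliary: the function whose derivative appears in the shift integral. -/
noncomputable def phi (a t : ℝ) : ℝ :=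
  if t = 0 then 1 else (Real.exp (-a*t) - Real.exp (-(a+2)*t))/(2*t)

noncomputable def phi' (a t : ℝ) : ℝ :=
  (-a*Real.exp (-a*t) + (a+2)*Real.exp (-(a+2)*t))/(2*t)
    - (Real.exp (-a*t) - Real.exp (-(a+2)*t))/(2*t^2)

noncomputable def psi (a t : ℝ) : ℝ :=
  (a*(Real.exp (-a*t) - Real.exp (-(a+1)*t))
    + (a+2)*(Real.exp (-(a+1)*t) - Real.exp (-(a+2)*t)))/(2*t)

lemma hpt {a t : ℝ} (ht : 0 < t) :
    (Real.exp (-a*t) - Real.exp (-(a+2)*t)) * g t = phi' a t + psi a t := by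
  have ht' : t ≠ 0 := ht.ne'
  have hu : Real.exp (-t) ≠ 0 := Real.exp_ne_zero _
  have e1 : Real.exp (-(a+1)*t) = Real.exp (-a*t) * Real.exp (-t) := by
    rw [← Real.exp_add]; ring_nf
  have e2 : Real.exp (-(a+2)*t) = Real.exp (-a*t) * (Real.exp (-t) * Real.exp (-t)) := by
    rw [← Real.exp_add, ← Real.exp_add]; ring_nf
  have hsinh2 : Real.sinh t = ((Real.exp (-t))⁻¹ - Real.exp (-t))/2 := by
    rw [Real.sinh_eq, Real.exp_neg, inv_inv]
  have hspos : 0 < Real.sinh t := Real.sinh_pos_iff.mpr ht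
  have hs2 : (Real.exp (-t))⁻¹ - Real.exp (-t) ≠ 0 := by
    rw [hsinh2] at hspos; intro h; rw [h] at hspos; norm_num at hspos
  have hlt : Real.exp (-t) < 1 := Real.exp_lt_one_iff.mpr (by linarith)
  have hs3 : 1 - Real.exp (-t)^2 ≠ 0 := by nlinarith [Real.exp_pos (-t)]
  rw [phi', psi, g, e1, e2, hsinh2]
  field_simp
  ring

lemma psi_integrable {a : ℝ} (ha : 0 < a) : IntegrableOn (psi a) (Set.Ioi (0:ℝ)) := by
  have h1 := (frullani ha (by linarith : a < a + 1)).1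
  have h2 := (frullani (by linarith : (0:ℝ) < a + 1) (by linarith : a + 1 < a + 2)).1
  apply IntegrableOn.congr_fun ((h1.const_mul (a/2)).add (h2.const_mul ((a+2)/2)))
    _ measurableSet_Ioi
  intro t ht
  have ht' : (t:ℝ) ≠ 0 := (mem_Ioi.mp ht).ne'
  simp only [psi, Pi.add_apply]
  field_simp

lemma K_eval {a : ℝ} (ha : 0 < a) :
    ∫ t in Set.Ioi (0:ℝ), (Real.exp (-a*t) - Real.exp (-(a+2)*t)) * g t
      = a/2 * Real.log ((a+1)/a) + (a+2)/2 * Real.log ((a+2)/(a+1)) - 1 := by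
  have ha2 : (0:ℝ) < a + 2 := by linarith
  -- integrability of the main integrand
  have hmain : IntegrableOn (fun t => (Real.exp (-a*t) - Real.exp (-(a+2)*t)) * g t)
      (Set.Ioi (0:ℝ)) := by
    apply IntegrableOn.congr_fun ((integrable_exp_mul_g ha).sub (integrable_exp_mul_g ha2))
      _ measurableSet_Ioi
    intro t _
    simp only [Pi.sub_apply]
    ring
  have hψ := psi_integrable ha
  -- integrability of phi'
  have hφ'int : IntegrableOn (phi' a) (Set.Ioi (0:ℝ)) := by
    apply IntegrableOn.congr_fun (hmain.sub hψ) _ measurableSet_Ioi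
    intro t ht
    simp only [Pi.sub_apply]
    rw [hpt (mem_Ioi.mp ht)]
    ring
  -- continuity of phi at 0 from the right
  have hφcont : ContinuousWithinAt (phi a) (Set.Ici (0:ℝ)) 0 := by
    have hd : HasDerivAt (fun t => Real.exp (-a*t) - Real.exp (-(a+2)*t)) 2 0 := by
      have d1 : HasDerivAt (fun t : ℝ => Real.exp (-a*t)) (-a) 0 := by
        simpa using ((hasDerivAt_id (0:ℝ)).const_mul (-a)).exp
      have d2 : HasDerivAt (fun t : ℝ => Real.exp (-(a+2)*t)) (-(a+2)) 0 := by
        simpa using ((hasDerivAt_id (0:ℝ)).const_mul (-(a+2))).exp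
      have := d1.sub d2
      have e : -a - -(a+2) = (2:ℝ) := by ring
      rwa [e] at this
    have hslope := hasDerivAt_iff_tendsto_slope.mp hd
    have h2 : Tendsto (fun t => slope (fun t => Real.exp (-a*t) - Real.exp (-(a+2)*t)) 0 t / 2)
        (nhdsWithin 0 {(0:ℝ)}ᶜ) (nhds 1) := by
      simpa using hslope.div_const 2
    have h3 : Tendsto (phi a) (nhdsWithin 0 {(0:ℝ)}ᶜ) (nhds 1) := by
      apply Tendsto.congr' _ h2
      filter_upwards [self_mem_nhdsWithin] with t ht
      have ht' : t ≠ 0 := ht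
      simp only [slope, phi, if_neg ht', vsub_eq_sub, sub_zero, mul_zero, neg_zero,
        Real.exp_zero, sub_self, smul_eq_mul]
      ring
    rw [← Set.Ioi_insert, continuousWithinAt_insert_self]
    have : phi a 0 = 1 := by simp [phi]
    rw [ContinuousWithinAt, this]
    exact h3.mono_left (nhdsWithin_mono 0 (fun s hs => ne_of_gt hs))
  -- derivative of phi on the positive axis
  have hφderiv : ∀ t ∈ Set.Ioi (0:ℝ), HasDerivAt (phi a) (phi' a t) t := by
    intro t ht
    have ht0 : (0:ℝ) < t := ht
    have hnum := (((hasDerivAt_id t).const_mul (-a)).exp).sub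
      (((hasDerivAt_id t).const_mul (-(a+2))).exp)
    simp only [id_eq, mul_one] at hnum
    have hden := (hasDerivAt_id t).const_mul (2:ℝ)
    simp only [id_eq, mul_one] at hden
    have hplain : HasDerivAt (fun s => (Real.exp (-a*s) - Real.exp (-(a+2)*s))/(2*s))
        (((Real.exp (-a*t) * (-a) - Real.exp (-(a+2)*t) * (-(a+2))) * (2*t)
          - (Real.exp (-a*t) - Real.exp (-(a+2)*t)) * 2) / (2*t)^2) t := by
      have := hnum.div hden (show (2:ℝ)*t ≠ 0 by positivity)
      exact this
    have heq : phi a =ᶠ[nhds t] fun s => (Real.exp (-a*s) - Real.exp (-(a+2)*s))/(2*s) := by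
      filter_upwards [isOpen_ne.mem_nhds ht0.ne'] with s hs
      simp only [phi, if_neg hs]
    rw [show phi' a t = ((Real.exp (-a*t) * (-a) - Real.exp (-(a+2)*t) * (-(a+2))) * (2*t)
          - (Real.exp (-a*t) - Real.exp (-(a+2)*t)) * 2) / (2*t)^2 by
      rw [phi']; field_simp; ring]
    exact hplain.congr_of_eventuallyEq heq
  -- limit of phi at infinity
  have hφtop : Tendsto (phi a) atTop (nhds 0) := by
    have l1 : Tendsto (fun t => Real.exp (-a*t) - Real.exp (-(a+2)*t)) atTop (nhds 0) := by
      have e1 : Tendsto (fun t : ℝ => Real.exp (-a*t)) atTop (nhds 0) :=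
        Real.tendsto_exp_atBot.comp ((tendsto_id (α := ℝ)).const_mul_atTop_of_neg (by linarith : -a < 0))
      have e2 : Tendsto (fun t : ℝ => Real.exp (-(a+2)*t)) atTop (nhds 0) :=
        Real.tendsto_exp_atBot.comp
          ((tendsto_id (α := ℝ)).const_mul_atTop_of_neg (by linarith : -(a+2) < 0))
      simpa using e1.sub e2
    have l2 : Tendsto (fun t : ℝ => (2*t)⁻¹) atTop (nhds 0) :=
      tendsto_inv_atTop_zero.comp ((tendsto_id (α := ℝ)).const_mul_atTop (by norm_num : (0:ℝ) < 2))
    have := l1.mul l2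
    rw [zero_mul] at this
    apply Tendsto.congr' _ this
    filter_upwards [eventually_gt_atTop (0:ℝ)] with t ht
    simp only [phi, if_neg ht.ne']
    rw [div_eq_mul_inv]
  -- FTC on the half-line
  have hFTC : ∫ t in Set.Ioi (0:ℝ), phi' a t = -1 := by
    rw [integral_Ioi_of_hasDerivAt_of_tendsto hφcont hφderiv hφ'int hφtop]
    simp [phi]
  -- the psi integral
  have hψeval : ∫ t in Set.Ioi (0:ℝ), psi a t
      = a/2 * Real.log ((a+1)/a) + (a+2)/2 * Real.log ((a+2)/(a+1)) := by
    have h1 := frullani ha (by linarith : a < a + 1)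
    have h2 := frullani (by linarith : (0:ℝ) < a + 1) (by linarith : a + 1 < a + 2)
    have : ∫ t in Set.Ioi (0:ℝ), psi a t
        = ∫ t in Set.Ioi (0:ℝ), (a/2 * ((Real.exp (-a*t) - Real.exp (-(a+1)*t))/t)
            + (a+2)/2 * ((Real.exp (-(a+1)*t) - Real.exp (-(a+2)*t))/t)) := by
      apply setIntegral_congr_fun measurableSet_Ioi
      intro t ht
      have ht' : (t:ℝ) ≠ 0 := (mem_Ioi.mp ht).ne'
      simp only [psi]
      field_simp
    rw [this, integral_add (h1.1.const_mul _) (h2.1.const_mul _),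
      MeasureTheory.integral_const_mul, MeasureTheory.integral_const_mul, h1.2, h2.2]
  -- put everything together
  have : ∫ t in Set.Ioi (0:ℝ), (Real.exp (-a*t) - Real.exp (-(a+2)*t)) * g t
      = ∫ t in Set.Ioi (0:ℝ), (phi' a t + psi a t) := by
    apply setIntegral_congr_fun measurableSet_Ioi
    intro t ht
    exact hpt (mem_Ioi.mp ht)
  rw [this, integral_add hφ'int hψ, hFTC, hψeval]
  ring

lemma Gamma_shift {s : ℝ} (hs : 0 < s) (n : ℕ) :
    Real.Gamma (s + n) = Real.Gamma s * ∏ j ∈ Finset.range n, (s + j) := by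
  induction n with
  | zero => simp
  | succ n ih =>
    have h1 : s + (n+1 : ℕ) = (s + n) + 1 := by push_cast; ring
    have h2 : s + (n:ℝ) ≠ 0 := by positivity
    rw [h1, Real.Gamma_add_one h2, ih, Finset.prod_range_succ]
    ring

lemma tendsto_G (x : ℝ) (hx : 0 < x) :
    Filter.Tendsto (fun n : ℕ => Real.log (Real.Gamma (x + n + 1/2)) - (x + n) * Real.log (x + n)
      + (x + n) - Real.log (Real.sqrt (2 * Real.pi))) atTop (nhds 0) := by
  set s : ℝ := x + 1/2 with hs
  have hs0 : 0 < s := by rw [hs]; linarith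
  set R : ℕ → ℝ := fun n => Real.Gamma (s + n) * Real.exp (x + n)
      / ((x + n) ^ (x + (n:ℝ)) * Real.sqrt (2 * Real.pi)) with hR
  have hπ : (0:ℝ) < Real.sqrt (2 * Real.pi) := Real.sqrt_pos.mpr (by positivity)
  -- log R n is the G-expression
  have hlog : ∀ n : ℕ, Real.log (Real.Gamma (x + n + 1/2)) - (x + n) * Real.log (x + n)
      + (x + n) - Real.log (Real.sqrt (2 * Real.pi)) = Real.log (R n) := by
    intro n
    have hxn : (0:ℝ) < x + n := by positivity
    have hΓ : 0 < Real.Gamma (s + n) := Real.Gamma_pos_of_pos (by positivity)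
    have harg : x + (n:ℝ) + 1/2 = s + n := by rw [hs]; ring
    rw [hR]
    rw [Real.log_div (by positivity) (by positivity), Real.log_mul hΓ.ne' (Real.exp_pos _).ne',
      Real.log_mul (by positivity) hπ.ne', Real.log_exp, Real.log_rpow hxn, harg]
    ring
  -- the product form
  have hform : ∀ n : ℕ, 1 ≤ n → R n =
      (Real.Gamma s / Real.GammaSeq s n) * (Stirling.stirlingSeq n / Real.sqrt Real.pi)
        * ((n:ℝ)/(s + n))
        * (Real.exp x / ((1 + x/(n:ℝ)) ^ (x:ℝ) * (1 + x/(n:ℝ)) ^ (n:ℕ))) := by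
    intro n hn
    have hN : (0:ℝ) < n := by exact_mod_cast hn
    have hxn : (0:ℝ) < x + n := by positivity
    have hsn : (0:ℝ) < s + n := by positivity
    have hb : (1:ℝ) + x/n = (x + n)/n := by field_simp; ring
    have hP : (0:ℝ) < ∏ j ∈ Finset.range (n+1), (s + j) := by
      apply Finset.prod_pos; intro j _; positivity
    have hPn : (0:ℝ) < ∏ j ∈ Finset.range n, (s + j) := by
      apply Finset.prod_pos; intro j _; positivity
    have hGseq : Real.GammaSeq s n = (n:ℝ) ^ (s:ℝ) * (Nat.factorial n : ℕ)
        / ∏ j ∈ Finset.range (n+1), (s + j) := rfl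
    have hfact : ((Nat.factorial n : ℕ) : ℝ) = Stirling.stirlingSeq n * (Real.sqrt (2*(n:ℝ)) * ((n:ℝ)/Real.exp 1)^n) := by
      rw [Stirling.stirlingSeq]
      field_simp
    have hprodsucc : ∏ j ∈ Finset.range (n+1), (s + j)
        = (∏ j ∈ Finset.range n, (s + j)) * (s + n) := Finset.prod_range_succ _ _
    -- powers
    have hpow1 : ((n:ℝ)/Real.exp 1)^(n:ℕ) = (n:ℝ) ^ ((n:ℕ):ℝ) / Real.exp (n:ℕ) := by
      rw [div_pow, ← Real.rpow_natCast ((n:ℝ)) n, ← Real.exp_one_pow, ← Real.rpow_natCast (Real.exp 1) n, Real.exp_one_rpow]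
    have hsqrt2n : Real.sqrt (2*(n:ℝ)) = Real.sqrt 2 * (n:ℝ) ^ ((1:ℝ)/2) := by
      rw [Real.sqrt_mul (by norm_num)]
      congr 1
      exact Real.sqrt_eq_rpow _
    have hsqrt2π : Real.sqrt (2*Real.pi) = Real.sqrt 2 * Real.sqrt Real.pi :=
      Real.sqrt_mul (by norm_num) _
    have hns : (n:ℝ) ^ (s:ℝ) * (n:ℝ) ^ ((1:ℝ)/2) = (n:ℝ) ^ (x:ℝ) * (n:ℝ) := by
      rw [← Real.rpow_add hN, ← Real.rpow_add_one hN.ne']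
      congr 1
      rw [hs]; ring
    have hxnpow : (x + (n:ℝ)) ^ (x + (n:ℝ)) = (x+n) ^ (x:ℝ) * (x+n) ^ ((n:ℕ):ℝ) := by
      rw [← Real.rpow_add hxn]
    have hdiv1 : ((1:ℝ) + x/n) ^ (x:ℝ) = (x+n) ^ (x:ℝ) / (n:ℝ) ^ (x:ℝ) := by
      rw [hb, Real.div_rpow hxn.le hN.le]
    have hdiv2 : ((1:ℝ) + x/n) ^ (n:ℕ) = (x+n) ^ ((n:ℕ):ℝ) / (n:ℝ) ^ ((n:ℕ):ℝ) := by
      rw [hb, div_pow, ← Real.rpow_natCast (x + (n:ℝ)) n, ← Real.rpow_natCast ((n:ℝ)) n]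
    have hexpn : Real.exp (x + (n:ℝ)) = Real.exp x * Real.exp ((n:ℕ):ℝ) := by
      rw [← Real.exp_add]
    -- Gamma recursion
    have hΓ : Real.Gamma (s + n) = Real.Gamma s * ∏ j ∈ Finset.range n, (s + j) :=
      Gamma_shift hs0 n
    simp only [hR]
    rw [hΓ, hGseq, hfact, hprodsucc, hpow1, hsqrt2n, hsqrt2π, hxnpow, hdiv1, hdiv2, hexpn]
    have h1 : (n:ℝ) ^ (x:ℝ) ≠ 0 := by positivity
    have h2 : (n:ℝ) ^ ((n:ℕ):ℝ) ≠ 0 := by positivity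
    have h3 : (x+(n:ℝ)) ^ (x:ℝ) ≠ 0 := by positivity
    have h4 : (x+(n:ℝ)) ^ ((n:ℕ):ℝ) ≠ 0 := by positivity
    have h5 : Real.sqrt Real.pi ≠ 0 := by positivity
    have h6 : Real.sqrt 2 ≠ 0 := by positivity
    have h7 : Real.exp ((n:ℕ):ℝ) ≠ 0 := Real.exp_ne_zero _
    have h8 : (n:ℝ) ^ (s:ℝ) ≠ 0 := by positivity
    have h9 : Real.Gamma s ≠ 0 := (Real.Gamma_pos_of_pos hs0).ne'
    have h10 : Stirling.stirlingSeq n ≠ 0 := by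
      obtain ⟨m, rfl⟩ := Nat.exists_eq_add_of_le hn
      rw [Nat.add_comm]
      exact (Stirling.stirlingSeq'_pos m).ne'
    have h11 : s + (n:ℝ) ≠ 0 := hsn.ne'
    have h12 : (∏ j ∈ Finset.range n, (s + (j:ℝ))) ≠ 0 := hPn.ne'
    have h13 : (n:ℝ) ^ ((1:ℝ)/2) ≠ 0 := by positivity
    have hns2 : (n:ℝ) ^ (s:ℝ) = (n:ℝ) ^ (x:ℝ) * (n:ℝ) / (n:ℝ) ^ ((1:ℝ)/2) := by
      rw [eq_div_iff h13]; exact hns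
    rw [hns2]
    field_simp
  -- limits of the four factors
  have hΓpos : 0 < Real.Gamma s := Real.Gamma_pos_of_pos hs0
  have t1 : Tendsto (fun n : ℕ => Real.Gamma s / Real.GammaSeq s n) atTop (nhds 1) := by
    have := Filter.Tendsto.div (tendsto_const_nhds (x := Real.Gamma s))
      (Real.GammaSeq_tendsto_Gamma s) hΓpos.ne'
    simpa [div_self hΓpos.ne', Pi.div_def] using this
  have t2 : Tendsto (fun n : ℕ => Stirling.stirlingSeq n / Real.sqrt Real.pi) atTop (nhds 1) := by
    have hπ' : Real.sqrt Real.pi ≠ 0 := by positivity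
    have := Stirling.tendsto_stirlingSeq_sqrt_pi.div_const (Real.sqrt Real.pi)
    simpa [div_self hπ'] using this
  have t3 : Tendsto (fun n : ℕ => (n:ℝ)/(s + n)) atTop (nhds 1) := by
    have := tendsto_natCast_div_add_atTop (s : ℝ)
    apply this.congr
    intro n
    rw [add_comm]
  have t4 : Tendsto (fun n : ℕ => ((1:ℝ) + x/(n:ℝ)) ^ (x:ℝ)) atTop (nhds 1) := by
    have hbase : Tendsto (fun n : ℕ => (1:ℝ) + x/(n:ℝ)) atTop (nhds 1) := by
      have := tendsto_const_div_atTop_nhds_zero_nat x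
      simpa using (tendsto_const_nhds (x := (1:ℝ))).add this
    have := hbase.rpow_const (p := x) (Or.inl one_ne_zero)
    simpa using this
  have t5 : Tendsto (fun n : ℕ => ((1:ℝ) + x/(n:ℝ)) ^ (n:ℕ)) atTop (nhds (Real.exp x)) :=
    Real.tendsto_one_add_div_pow_exp x
  have t6 : Tendsto (fun n : ℕ => Real.exp x / (((1:ℝ) + x/(n:ℝ)) ^ (x:ℝ)
      * ((1:ℝ) + x/(n:ℝ)) ^ (n:ℕ))) atTop (nhds 1) := by
    have hd := t4.mul t5
    rw [one_mul] at hd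
    have := Filter.Tendsto.div (tendsto_const_nhds (x := Real.exp x)) hd (Real.exp_ne_zero x)
    simpa [div_self (Real.exp_ne_zero x), Pi.div_def] using this
  have hR1 : Tendsto R atTop (nhds 1) := by
    have hT := ((t1.mul t2).mul t3).mul t6
    norm_num at hT
    apply Tendsto.congr' _ hT
    filter_upwards [eventually_ge_atTop 1] with n hn
    exact (hform n hn).symm
  -- conclude
  have hlogR : Tendsto (fun n : ℕ => Real.log (R n)) atTop (nhds 0) := by
    have := (Real.continuousAt_log one_ne_zero).tendsto.comp hR1
    simpa [Function.comp_def] using this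
  apply Tendsto.congr _ hlogR
  intro n
  exact (hlog n).symm


/-- Binet's integral formula (normalized form). -/
lemma J_eq {x : ℝ} (hx : 0 < x) :
    (∫ t in Set.Ioi (0:ℝ), Real.exp (-(2*x)*t) * g t)
      = Real.log (Real.Gamma (x + 1/2)) - x * Real.log x + x
        - Real.log (Real.sqrt (2*Real.pi)) := by
  set J : ℝ → ℝ := fun y => ∫ t in Set.Ioi (0:ℝ), Real.exp (-(2*y)*t) * g t with hJ
  set G : ℝ → ℝ := fun y => Real.log (Real.Gamma (y + 1/2)) - y * Real.log y + y
    - Real.log (Real.sqrt (2*Real.pi)) with hG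
  -- the functional equation
  have hstep : ∀ y : ℝ, 0 < y → J y - G y = J (y+1) - G (y+1) := by
    intro y hy
    have h2y : (0:ℝ) < 2*y := by linarith
    have hJdiff : J y - J (y+1)
        = ∫ t in Set.Ioi (0:ℝ), (Real.exp (-(2*y)*t) - Real.exp (-(2*y+2)*t)) * g t := by
      rw [hJ]
      rw [← integral_sub (integrable_exp_mul_g h2y) (integrable_exp_mul_g (by linarith))]
      apply setIntegral_congr_fun measurableSet_Ioi
      intro t _
      show Real.exp (-(2*y)*t) * g t - Real.exp (-(2*(y+1))*t) * g t
        = (Real.exp (-(2*y)*t) - Real.exp (-(2*y+2)*t)) * g t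
      have : -(2*(y+1))*t = -(2*y+2)*t := by ring
      rw [this]
      ring
    have hK := K_eval h2y
    have hKr : J y - J (y+1) = (2*y)/2 * Real.log ((2*y+1)/(2*y))
        + (2*y+2)/2 * Real.log ((2*y+2)/(2*y+1)) - 1 := by
      rw [hJdiff]
      convert hK using 2 <;> ring_nf
    -- gamma recursion for the G side
    have hyh : y + 1/2 ≠ 0 := by positivity
    have hΓrec : Real.Gamma (y + 1 + 1/2) = (y + 1/2) * Real.Gamma (y + 1/2) := by
      rw [show y + 1 + 1/2 = (y + 1/2) + 1 by ring, Real.Gamma_add_one hyh]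
    have hΓpos : 0 < Real.Gamma (y + 1/2) := Real.Gamma_pos_of_pos (by positivity)
    have hGdiff : G y - G (y+1)
        = -Real.log (y + 1/2) - y * Real.log y + (y+1) * Real.log (y+1) - 1 := by
      rw [hG]
      simp only
      rw [hΓrec, Real.log_mul (by positivity) hΓpos.ne']
      ring
    -- the two differences agree
    have hlog1 : Real.log ((2*y+1)/(2*y)) = Real.log (y + 1/2) - Real.log y := by
      rw [show (2*y+1)/(2*y) = (y+1/2)/y by field_simp,
        Real.log_div (by positivity) (by positivity)]
    have hlog2 : Real.log ((2*y+2)/(2*y+1)) = Real.log (y+1) - Real.log (y + 1/2) := by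
      rw [show (2*y+2)/(2*y+1) = (y+1)/(y+1/2) by field_simp,
        Real.log_div (by positivity) (by positivity)]
    have : J y - J (y+1) = G y - G (y+1) := by
      rw [hKr, hGdiff, hlog1, hlog2]
      ring
    linarith
  -- iterate
  have hiter : ∀ n : ℕ, J x - G x = J (x + n) - G (x + n) := by
    intro n
    induction n with
    | zero => simp
    | succ n ih =>
      rw [ih, hstep (x + n) (by positivity)]
      push_cast
      ring_nf
  -- limits
  have hJlim : Tendsto (fun n : ℕ => J (x + n)) atTop (nhds 0) := by
    apply squeeze_zero_norm (a := fun n : ℕ => 1/(4*(x+(n:ℝ))))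
    · intro n
      rw [hJ, Real.norm_eq_abs]
      exact J_abs (by positivity)
    have h1 : Tendsto (fun n : ℕ => 4 * (x + (n:ℝ))) atTop atTop := by
      apply Filter.Tendsto.const_mul_atTop (by norm_num : (0:ℝ) < 4)
      apply tendsto_atTop_add_const_left
      exact tendsto_natCast_atTop_atTop
    have h2 := h1.inv_tendsto_atTop
    apply h2.congr
    intro n
    simp [Pi.inv_apply, one_div]
  have hGlim : Tendsto (fun n : ℕ => G (x + n)) atTop (nhds 0) := by
    have := tendsto_G x hx
    apply Tendsto.congr _ this
    intro n
    rw [hG]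
  have hlim : Tendsto (fun n : ℕ => J (x + n) - G (x + n)) atTop (nhds 0) := by
    simpa using hJlim.sub hGlim
  have hconst : Tendsto (fun _ : ℕ => J x - G x) atTop (nhds (J x - G x)) := tendsto_const_nhds
  have : J x - G x = 0 := by
    apply tendsto_nhds_unique _ hlim
    apply hconst.congr
    intro n
    exact hiter n
  have hJG : J x = G x := by linarith
  exact hJG

end WeberBinet

/- STATEMENT 8: For ν > 0 and ħ > 0, the Laplace integral of BW along the positive
real axis converges, and the Borel sum of e^{W(ħ)} equals
e^{ν/ħ} Γ(ν/ħ + 1/2) / (√(2π) (ν/ħ)^{ν/ħ})  (Binet's formula). -/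
theorem weber_borel_sum_binet (ν hbar : ℝ) (hν : 0 < ν) (hh : 0 < hbar) :
    IntegrableOn (fun ζ => Real.exp (-ζ / hbar) * weberBorelTransformReal ν ζ)
      (Set.Ioi (0 : ℝ)) ∧
    Real.exp (∫ ζ in Set.Ioi (0 : ℝ), Real.exp (-ζ / hbar) * weberBorelTransformReal ν ζ)
      = Real.exp (ν / hbar) * Real.Gamma (ν / hbar + 1 / 2)
          / (Real.sqrt (2 * Real.pi) * (ν / hbar) ^ (ν / hbar)) := by
  have hx : 0 < ν / hbar := by positivity
  set x : ℝ := ν / hbar with hxdef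
  have h2x : 0 < 2 * x := by linarith
  have h2ν : (0:ℝ) < 2 * ν := by linarith
  have hinv : (0:ℝ) < (2*ν)⁻¹ := by positivity
  set F : ℝ → ℝ := fun t => Real.exp (-(2*x)*t) * WeberBinet.g t with hF
  -- pointwise identification of the integrands on `Ioi 0`
  have hEq : ∀ ζ ∈ Set.Ioi (0:ℝ),
      Real.exp (-ζ/hbar) * weberBorelTransformReal ν ζ = (2*ν)⁻¹ * F ((2*ν)⁻¹ * ζ) := by
    intro ζ hζ
    have hζ0 : (0:ℝ) < ζ := hζ
    have hu : (0:ℝ) < ζ/(2*ν) := by positivity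
    have hsinh : Real.sinh (ζ/(2*ν)) ≠ 0 := (Real.sinh_pos_iff.mpr hu).ne'
    have h1e : 1 < Real.exp (ζ/(2*ν)) := by
      rw [← Real.exp_zero]
      exact Real.exp_lt_exp.mpr hu
    have he1 : Real.exp (ζ/(2*ν)) - 1 ≠ 0 := sub_ne_zero.mpr h1e.ne'
    have he2 : Real.exp (ζ/(2*ν)) + 1 ≠ 0 := by positivity
    have hE2 : Real.exp (ζ/(2*ν)) ^ 2 - 1 ≠ 0 := by nlinarith
    have hexp : Real.exp (ζ/(2*ν)) ≠ 0 := Real.exp_ne_zero _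
    have hsinh_eq : Real.sinh (ζ/(2*ν))
        = (Real.exp (ζ/(2*ν)) ^ 2 - 1)/(2 * Real.exp (ζ/(2*ν))) := by
      rw [Real.sinh_eq, Real.exp_neg]
      field_simp
    have hBW : weberBorelTransformReal ν ζ = (2*ν)⁻¹ * WeberBinet.g (ζ/(2*ν)) := by
      rw [weberBorelTransformReal, WeberBinet.g, hsinh_eq]
      field_simp
      ring
    have hexpeq : Real.exp (-ζ/hbar) = Real.exp (-(2*x)*((2*ν)⁻¹ * ζ)) := by
      congr 1
      rw [hxdef]
      field_simp
    have hargeq : (2*ν)⁻¹ * ζ = ζ/(2*ν) := by ring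
    rw [hBW, hF, hexpeq, hargeq]
    ring
  -- integrability
  have hFint : IntegrableOn F (Set.Ioi (0:ℝ)) := WeberBinet.integrable_exp_mul_g h2x
  have hcomp : IntegrableOn (fun ζ => F ((2*ν)⁻¹ * ζ)) (Set.Ioi (0:ℝ)) := by
    have := (integrableOn_Ioi_comp_mul_left_iff F 0 hinv).mpr
    simpa using this (by simpa using hFint)
  have hInt : IntegrableOn (fun ζ => Real.exp (-ζ/hbar) * weberBorelTransformReal ν ζ)
      (Set.Ioi (0:ℝ)) := by
    apply IntegrableOn.congr_fun (hcomp.const_mul ((2*ν)⁻¹)) _ measurableSet_Ioi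
    intro ζ hζ
    exact (hEq ζ hζ).symm
  refine ⟨hInt, ?_⟩
  -- evaluate the integral
  have hval : ∫ ζ in Set.Ioi (0:ℝ), Real.exp (-ζ/hbar) * weberBorelTransformReal ν ζ
      = ∫ t in Set.Ioi (0:ℝ), F t := by
    rw [setIntegral_congr_fun measurableSet_Ioi hEq]
    rw [MeasureTheory.integral_const_mul]
    rw [integral_comp_mul_left_Ioi F 0 hinv]
    simp only [mul_zero, smul_eq_mul]
    rw [inv_inv, ← mul_assoc, inv_mul_cancel₀ h2ν.ne', one_mul]
  rw [hval]
  have hJ := WeberBinet.J_eq hx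
  rw [hF]
  rw [hJ]
  -- exponentiate
  have hΓpos : 0 < Real.Gamma (x + 1/2) := Real.Gamma_pos_of_pos (by positivity)
  have hsq : (0:ℝ) < Real.sqrt (2*Real.pi) := Real.sqrt_pos.mpr (by positivity)
  have hsplit : Real.log (Real.Gamma (x + 1/2)) - x * Real.log x + x
      - Real.log (Real.sqrt (2*Real.pi))
      = (Real.log (Real.Gamma (x + 1/2)) + x) - (x * Real.log x + Real.log (Real.sqrt (2*Real.pi))) := by
    ring
  rw [hsplit, Real.exp_sub, Real.exp_add, Real.exp_add, Real.exp_log hΓpos,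
    Real.exp_log hsq]
  have hxx : Real.exp (x * Real.log x) = x ^ (x:ℝ) := by
    rw [Real.rpow_def_of_pos hx, mul_comm]
  rw [hxx]
  ring
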